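/- Every threshold hypergraph is Laplacian r-integral for some r ∈ ℚ: there exists a rational r such that every eigenvalue of L_G is an integer multiple of r. -/

import Mathlib

open Finset

/-- The hypergraph Laplacian as an operator on real-valued vertex functions:
`(L_G f)(v) = ∑_{e ∋ v} (1/(|e|-1)) ∑_{u ∈ e} (f v - f u)`. -/
noncomputable def lapOp {V : Type} [Fintype V] [DecidableEq V] (E : Finset (Finset V)) (f : V → ℝ) : V → ℝ :=
  fun v => ∑ e ∈ E.filter (fun e => v ∈ e), (1 / ((e.card : ℝ) - 1)) * ∑ u ∈ e, (f v - f u)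

/-- The matrix of the hypergraph Laplacian. -/
noncomputable def lapMatrix {V : Type} [Fintype V] [DecidableEq V] (E : Finset (Finset V)) : Matrix V V ℝ :=
  Matrix.of fun v w => ∑ e ∈ E.filter (fun e => v ∈ e),
    (1 / ((e.card : ℝ) - 1)) * ((if w = v then (e.card : ℝ) else 0) - (if w ∈ e then 1 else 0))

/-- Edge set obtained from `E` by adding a `k`-dominating set `S = Fin k` of fresh vertices:
the new edges are `S ∪ {u}` for every old vertex `u`. -/
def domEdges {V : Type} [Fintype V] [DecidableEq V] (E : Finset (Finset V)) (k : ℕ) :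
    Finset (Finset (V ⊕ Fin k)) :=
  E.image (Finset.image Sum.inl) ∪
    (Finset.univ : Finset V).image
      (fun u => insert (Sum.inl u) ((Finset.univ : Finset (Fin k)).image Sum.inr))

/-- Vertex type of the threshold hypergraph with string `0^{m 0} (k 0) 0^{m 1} (k 1) ⋯`:
`inl ⟨i, a⟩` is the `a`-th isolated vertex added before the `i`-th domination, and
`inr ⟨i, b⟩` is the `b`-th vertex of the `i`-th dominating set. -/
abbrev TV (d : ℕ) (m k : Fin d → ℕ) : Type :=
  (Σ i : Fin d, Fin (m i)) ⊕ (Σ i : Fin d, Fin (k i))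

/-- Vertices present just before the `i`-th domination is applied. -/
def before (d : ℕ) (m k : Fin d → ℕ) (i : Fin d) : Finset (TV d m k) :=
  (((Finset.univ.filter (fun j : Fin d => j ≤ i)).sigma
      fun j => (Finset.univ : Finset (Fin (m j)))).image Sum.inl) ∪
  (((Finset.univ.filter (fun j : Fin d => j < i)).sigma
      fun j => (Finset.univ : Finset (Fin (k j)))).image Sum.inr)

/-- The `i`-th dominating set. -/
def domSet (d : ℕ) (m k : Fin d → ℕ) (i : Fin d) : Finset (TV d m k) :=
  (Finset.univ : Finset (Fin (k i))).image fun b => Sum.inr ⟨i, b⟩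

/-- The edge set of the threshold hypergraph `0^{m 0} (k 0) 0^{m 1} (k 1) ⋯ 0^{m (d-1)} (k (d-1))`:
the `i`-th domination adds the edges `S_i ∪ {u}` for all previously present vertices `u`. -/
def thrEdges (d : ℕ) (m k : Fin d → ℕ) : Finset (Finset (TV d m k)) :=
  Finset.univ.biUnion fun i : Fin d =>
    (before d m k i).image fun u => insert u (domSet d m k i)


namespace Stmt12

variable {d : ℕ} {m k : Fin d → ℕ}

/-! ### Membership lemmas -/

lemma mem_before_inl {i j : Fin d} {a : Fin (m j)} :
    (Sum.inl ⟨j, a⟩ : TV d m k) ∈ before d m k i ↔ j ≤ i := by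
  simp only [before, Finset.mem_union, Finset.mem_image, Finset.mem_sigma, Finset.mem_filter,
    Finset.mem_univ, true_and]
  constructor
  · rintro (⟨⟨j', a'⟩, hj', h⟩ | ⟨⟨j', b'⟩, hj', h⟩)
    · obtain ⟨rfl⟩ : (⟨j', a'⟩ : Σ j : Fin d, Fin (m j)) = ⟨j, a⟩ := Sum.inl.inj h
      exact hj'.1
    · exact absurd h (by simp)
  · intro h; exact Or.inl ⟨⟨j, a⟩, ⟨h, trivial⟩, rfl⟩

lemma mem_before_inr {i j : Fin d} {b : Fin (k j)} :
    (Sum.inr ⟨j, b⟩ : TV d m k) ∈ before d m k i ↔ j < i := by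
  simp only [before, Finset.mem_union, Finset.mem_image, Finset.mem_sigma, Finset.mem_filter,
    Finset.mem_univ, true_and]
  constructor
  · rintro (⟨⟨j', a'⟩, hj', h⟩ | ⟨⟨j', b'⟩, hj', h⟩)
    · exact absurd h (by simp)
    · obtain ⟨rfl⟩ : (⟨j', b'⟩ : Σ j : Fin d, Fin (k j)) = ⟨j, b⟩ := Sum.inr.inj h
      exact hj'.1
  · intro h; exact Or.inr ⟨⟨j, b⟩, ⟨h, trivial⟩, rfl⟩

lemma mem_domSet_inr {i j : Fin d} {b : Fin (k j)} :
    (Sum.inr ⟨j, b⟩ : TV d m k) ∈ domSet d m k i ↔ j = i := by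
  simp only [domSet, Finset.mem_image, Finset.mem_univ, true_and]
  constructor
  · rintro ⟨b', h⟩
    obtain ⟨rfl⟩ : (⟨i, b'⟩ : Σ j : Fin d, Fin (k j)) = ⟨j, b⟩ := Sum.inr.inj h
    rfl
  · rintro rfl; exact ⟨b, rfl⟩

lemma not_mem_domSet_inl {i j : Fin d} {a : Fin (m j)} :
    (Sum.inl ⟨j, a⟩ : TV d m k) ∉ domSet d m k i := by
  simp [domSet]

lemma disjoint_before_domSet (i : Fin d) :
    Disjoint (before d m k i) (domSet d m k i) := by
  rw [Finset.disjoint_left]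
  rintro (⟨j, a⟩ | ⟨j, b⟩) hv hv'
  · exact not_mem_domSet_inl hv'
  · rw [mem_before_inr] at hv
    rw [mem_domSet_inr] at hv'
    exact absurd hv (by simp [hv'])

lemma domSet_subset_before {i j : Fin d} (h : i < j) :
    domSet d m k i ⊆ before d m k j := by
  intro v hv
  rcases v with ⟨j', a⟩ | ⟨j', b⟩
  · exact absurd hv not_mem_domSet_inl
  · rw [mem_domSet_inr] at hv
    rw [mem_before_inr, hv]; exact h

lemma before_subset_before {i j : Fin d} (h : i ≤ j) :
    before d m k i ⊆ before d m k j := by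
  intro v hv
  rcases v with ⟨j', a⟩ | ⟨j', b⟩
  · rw [mem_before_inl] at hv ⊢; exact hv.trans h
  · rw [mem_before_inr] at hv ⊢; exact hv.trans_le h

lemma card_domSet (i : Fin d) : (domSet d m k i).card = k i := by
  have hinj : Function.Injective (fun b : Fin (k i) => (Sum.inr ⟨i, b⟩ : TV d m k)) := by
    intro b b' h
    obtain ⟨-, h2⟩ := Sigma.mk.inj_iff.mp (Sum.inr.inj h)
    exact eq_of_heq h2
  rw [domSet, Finset.card_image_of_injective _ hinj, Finset.card_univ, Fintype.card_fin]

lemma card_insert_domSet {i : Fin d} {u : TV d m k} (hu : u ∉ domSet d m k i) :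
    (insert u (domSet d m k i)).card = k i + 1 := by
  rw [Finset.card_insert_of_notMem hu, card_domSet]

/-! ### Stage decomposition -/

lemma not_mem_domSet_of_mem_before {i : Fin d} {u : TV d m k} (hu : u ∈ before d m k i) :
    u ∉ domSet d m k i :=
  Finset.disjoint_left.mp (disjoint_before_domSet i) hu

lemma edge_not_lt (hk : ∀ i, 1 ≤ k i) {i j : Fin d} {u u' : TV d m k}
    (hu : u ∈ before d m k i)
    (h : insert u (domSet d m k i) = insert u' (domSet d m k j)) : ¬ i < j := by
  intro hij
  have hx : (Sum.inr ⟨j, ⟨0, hk j⟩⟩ : TV d m k) ∈ insert u (domSet d m k i) := by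
    rw [h]
    exact Finset.mem_insert_of_mem (mem_domSet_inr.mpr rfl)
  rcases Finset.mem_insert.mp hx with hx | hx
  · rw [← hx] at hu
    rw [mem_before_inr] at hu
    exact absurd hij (lt_asymm hu)
  · rw [mem_domSet_inr] at hx
    exact absurd hij (by simp [hx])

lemma edge_eq_stage (hk : ∀ i, 1 ≤ k i) {i j : Fin d} {u u' : TV d m k}
    (hu : u ∈ before d m k i) (hu' : u' ∈ before d m k j)
    (h : insert u (domSet d m k i) = insert u' (domSet d m k j)) : i = j :=
  le_antisymm (not_lt.mp (edge_not_lt hk hu' h.symm)) (not_lt.mp (edge_not_lt hk hu h))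

lemma insert_injOn (i : Fin d) : ∀ u ∈ before d m k i, ∀ u' ∈ before d m k i,
    insert u (domSet d m k i) = insert u' (domSet d m k i) → u = u' := by
  intro u hu u' hu' h
  have : u ∈ insert u' (domSet d m k i) := h ▸ Finset.mem_insert_self u _
  rcases Finset.mem_insert.mp this with h' | h'
  · exact h'
  · exact absurd h' (not_mem_domSet_of_mem_before hu)

/-- The contribution of the `i`-th stage's edges to the Laplacian. -/
noncomputable def stageTerm (d : ℕ) (m k : Fin d → ℕ) (i : Fin d) (f : TV d m k → ℝ)
    (v : TV d m k) : ℝ :=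
  ∑ u ∈ before d m k i, (if v ∈ insert u (domSet d m k i) then
    (1 / (k i : ℝ)) * ∑ w ∈ insert u (domSet d m k i), (f v - f w) else 0)

lemma lap_decomp (hk : ∀ i, 1 ≤ k i) (f : TV d m k → ℝ) (v : TV d m k) :
    lapOp (thrEdges d m k) f v = ∑ i, stageTerm d m k i f v := by
  have hdisj : (↑(Finset.univ : Finset (Fin d)) : Set (Fin d)).PairwiseDisjoint
      (fun i => (before d m k i).image fun u => insert u (domSet d m k i)) := by
    intro i _ j _ hij
    rw [Function.onFun, Finset.disjoint_left]
    rintro e he he'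
    obtain ⟨u, hu, rfl⟩ := Finset.mem_image.mp he
    obtain ⟨u', hu', h⟩ := Finset.mem_image.mp he'
    exact hij (edge_eq_stage hk hu hu' h.symm)
  rw [lapOp, thrEdges, Finset.sum_filter, Finset.sum_biUnion hdisj]
  refine Finset.sum_congr rfl fun i _ => ?_
  rw [stageTerm, Finset.sum_image (insert_injOn i)]
  refine Finset.sum_congr rfl fun u hu => ?_
  have hcard : (insert u (domSet d m k i)).card = k i + 1 :=
    card_insert_domSet (not_mem_domSet_of_mem_before hu)
  rw [hcard]
  norm_num

lemma sum_insert_eval (f : TV d m k → ℝ) {i : Fin d} {u : TV d m k}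
    (hu : u ∉ domSet d m k i) (v : TV d m k) :
    ∑ w ∈ insert u (domSet d m k i), (f v - f w)
      = ((k i : ℝ) + 1) * f v - f u - ∑ w ∈ domSet d m k i, f w := by
  rw [Finset.sum_insert hu, Finset.sum_sub_distrib, Finset.sum_const, card_domSet,
    nsmul_eq_mul]
  ring

/-! ### Per-stage computations -/

/-- If `f` is constant on `before i ∪ domSet i`, the `i`-th stage contributes nothing. -/
lemma stage_const {i : Fin d} {c : ℝ} {f : TV d m k → ℝ}
    (h : ∀ v ∈ before d m k i, f v = c) (h' : ∀ v ∈ domSet d m k i, f v = c)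
    (v : TV d m k) : stageTerm d m k i f v = 0 := by
  refine Finset.sum_eq_zero fun u hu => ?_
  split_ifs with hv
  · have hval : ∀ w ∈ insert u (domSet d m k i), f w = c := by
      intro w hw
      rcases Finset.mem_insert.mp hw with rfl | hw
      · exact h _ hu
      · exact h' _ hw
    have : ∑ w ∈ insert u (domSet d m k i), (f v - f w) = 0 := by
      refine Finset.sum_eq_zero fun w hw => ?_
      rw [hval v hv, hval w hw, sub_self]
    rw [this, mul_zero]
  · rfl

/-- If `f` is supported on `before i` with zero sum, stage `i` acts as the identity. -/
lemma stage_id (hk : ∀ i, 1 ≤ k i) {i : Fin d} {f : TV d m k → ℝ}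
    (hs : ∀ v, v ∉ before d m k i → f v = 0) (h0 : ∑ v ∈ before d m k i, f v = 0)
    (v : TV d m k) : stageTerm d m k i f v = f v := by
  have hkR : (k i : ℝ) ≠ 0 := Nat.cast_ne_zero.mpr (Nat.one_le_iff_ne_zero.mp (hk i))
  have hSsum : ∑ w ∈ domSet d m k i, f w = 0 :=
    Finset.sum_eq_zero fun w hw => hs w (Finset.disjoint_right.mp (disjoint_before_domSet i) hw)
  by_cases hvB : v ∈ before d m k i
  · have hvS : v ∉ domSet d m k i := not_mem_domSet_of_mem_before hvB
    have : stageTerm d m k i f v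
        = ∑ u ∈ before d m k i, (if u = v then
            (1 / (k i : ℝ)) * ∑ w ∈ insert u (domSet d m k i), (f v - f w) else 0) := by
      refine Finset.sum_congr rfl fun u _ => ?_
      congr 1
      simp only [Finset.mem_insert, eq_iff_iff]
      constructor
      · rintro (rfl | h)
        · rfl
        · exact absurd h hvS
      · rintro rfl; exact Or.inl rfl
    rw [this, Finset.sum_ite_eq' (before d m k i) v, if_pos hvB,
      sum_insert_eval f hvS, hSsum]
    field_simp
    ring
  · by_cases hvS : v ∈ domSet d m k i
    · have hfv : f v = 0 := hs v hvB
      have : stageTerm d m k i f v = ∑ u ∈ before d m k i, (-(1 / (k i : ℝ)) * f u) := by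
        refine Finset.sum_congr rfl fun u hu => ?_
        rw [if_pos (Finset.mem_insert_of_mem hvS),
          sum_insert_eval f (not_mem_domSet_of_mem_before hu), hSsum, hfv]
        ring
      rw [this, ← Finset.mul_sum, h0, mul_zero, hfv]
    · have : stageTerm d m k i f v = 0 := by
        refine Finset.sum_eq_zero fun u hu => ?_
        rw [if_neg]
        intro hv
        rcases Finset.mem_insert.mp hv with rfl | hv
        · exact hvB hu
        · exact hvS hv
      rw [this, hs v hvB]

/-- A zero-sum function supported on `domSet i`: stage `i` scales it. -/
lemma stage_Sdiff (hk : ∀ i, 1 ≤ k i) {i : Fin d} {f : TV d m k → ℝ}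
    (hs : ∀ v, v ∉ domSet d m k i → f v = 0) (h0 : ∑ v ∈ domSet d m k i, f v = 0)
    (v : TV d m k) :
    stageTerm d m k i f v
      = (((k i : ℝ) + 1) * ((before d m k i).card : ℝ) / (k i : ℝ)) * f v := by
  by_cases hvS : v ∈ domSet d m k i
  · have : stageTerm d m k i f v
        = ∑ _u ∈ before d m k i, ((1 / (k i : ℝ)) * (((k i : ℝ) + 1) * f v)) := by
      refine Finset.sum_congr rfl fun u hu => ?_
      rw [if_pos (Finset.mem_insert_of_mem hvS),
        sum_insert_eval f (not_mem_domSet_of_mem_before hu), h0,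
        hs _ (Finset.disjoint_left.mp (disjoint_before_domSet i) hu)]
      ring
    rw [this, Finset.sum_const, nsmul_eq_mul]
    ring
  · have hfv : f v = 0 := hs v hvS
    have : stageTerm d m k i f v = 0 := by
      refine Finset.sum_eq_zero fun u hu => ?_
      split_ifs with hv
      · rcases Finset.mem_insert.mp hv with rfl | hv
        · rw [sum_insert_eval f (not_mem_domSet_of_mem_before hu), h0, hfv]
          ring
        · exact absurd hv hvS
      · rfl
    rw [this, hfv, mul_zero]

/-- The vector `k i` on `before i`, `-(card (before i))` on `domSet i`, zero elsewhere. -/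
noncomputable def muVec (d : ℕ) (m k : Fin d → ℕ) (i : Fin d) : TV d m k → ℝ :=
  fun v => if v ∈ before d m k i then (k i : ℝ)
    else if v ∈ domSet d m k i then -((before d m k i).card : ℝ) else 0

lemma stage_mu (hk : ∀ i, 1 ≤ k i) (i : Fin d) (v : TV d m k) :
    stageTerm d m k i (muVec d m k i) v
      = ((((before d m k i).card : ℝ) + (k i : ℝ)) / (k i : ℝ)) * muVec d m k i v := by
  have hkR : (k i : ℝ) ≠ 0 := Nat.cast_ne_zero.mpr (Nat.one_le_iff_ne_zero.mp (hk i))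
  set b : ℝ := ((before d m k i).card : ℝ) with hb
  have hSsum : ∑ w ∈ domSet d m k i, muVec d m k i w = (k i : ℝ) * (-b) := by
    have : ∀ w ∈ domSet d m k i, muVec d m k i w = -b := by
      intro w hw
      rw [muVec, if_neg (Finset.disjoint_right.mp (disjoint_before_domSet i) hw), if_pos hw]
    rw [Finset.sum_congr rfl this, Finset.sum_const, card_domSet, nsmul_eq_mul]
  by_cases hvB : v ∈ before d m k i
  · have hvS : v ∉ domSet d m k i := not_mem_domSet_of_mem_before hvB
    have hμv : muVec d m k i v = (k i : ℝ) := by rw [muVec, if_pos hvB]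
    have : stageTerm d m k i (muVec d m k i) v
        = ∑ u ∈ before d m k i, (if u = v then
            (1 / (k i : ℝ)) * ∑ w ∈ insert u (domSet d m k i), (muVec d m k i v - muVec d m k i w)
          else 0) := by
      refine Finset.sum_congr rfl fun u _ => ?_
      congr 1
      simp only [Finset.mem_insert, eq_iff_iff]
      constructor
      · rintro (rfl | h)
        · rfl
        · exact absurd h hvS
      · rintro rfl; exact Or.inl rfl
    rw [this, Finset.sum_ite_eq' (before d m k i) v, if_pos hvB,
      sum_insert_eval _ hvS, hSsum, hμv]
    field_simp
    ring
  · by_cases hvS : v ∈ domSet d m k i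
    · have hμv : muVec d m k i v = -b := by rw [muVec, if_neg hvB, if_pos hvS]
      have : stageTerm d m k i (muVec d m k i) v
          = ∑ _u ∈ before d m k i, ((1 / (k i : ℝ)) * (-(b + (k i : ℝ)))) := by
        refine Finset.sum_congr rfl fun u hu => ?_
        rw [if_pos (Finset.mem_insert_of_mem hvS),
          sum_insert_eval _ (not_mem_domSet_of_mem_before hu), hSsum, hμv]
        have hμu : muVec d m k i u = (k i : ℝ) := by rw [muVec, if_pos hu]
        rw [hμu]
        ring
      rw [this, Finset.sum_const, nsmul_eq_mul, hμv, ← hb]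
      field_simp
    · have hμv : muVec d m k i v = 0 := by rw [muVec, if_neg hvB, if_neg hvS]
      have : stageTerm d m k i (muVec d m k i) v = 0 := by
        refine Finset.sum_eq_zero fun u hu => ?_
        rw [if_neg]
        intro hv
        rcases Finset.mem_insert.mp hv with rfl | hv
        · exact hvB hu
        · exact hvS hv
      rw [this, hμv, mul_zero]

/-! ### Aggregated eigenvector lemmas -/

lemma disjoint_domSet {i j : Fin d} (h : i ≠ j) :
    Disjoint (domSet d m k i) (domSet d m k j) := by
  rw [Finset.disjoint_left]
  rintro (⟨j', a⟩ | ⟨j', b⟩) hv hv'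
  · exact not_mem_domSet_inl hv
  · rw [mem_domSet_inr] at hv hv'
    exact h (hv ▸ hv' ▸ rfl)

lemma disjoint_before_domSet' {i j : Fin d} (h : j ≤ i) :
    Disjoint (before d m k j) (domSet d m k i) :=
  (disjoint_before_domSet i).mono_left (before_subset_before h)

lemma eig_aux (hk : ∀ i, 1 ≤ k i) (f : TV d m k → ℝ) (i : Fin d) (A : ℝ)
    (hlt : ∀ j, j < i → ∀ v, stageTerm d m k j f v = 0)
    (heq : ∀ v, stageTerm d m k i f v = A * f v)
    (hgt : ∀ j, i < j → ∀ v, stageTerm d m k j f v = f v) :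
    lapOp (thrEdges d m k) f
      = (A + ((Finset.univ.filter fun j => i < j).card : ℝ)) • f := by
  funext v
  rw [Pi.smul_apply, smul_eq_mul, lap_decomp hk]
  have step : ∀ j : Fin d, stageTerm d m k j f v
      = ((if j = i then A else 0) + (if i < j then (1:ℝ) else 0)) * f v := by
    intro j
    rcases lt_trichotomy j i with hj | rfl | hj
    · rw [hlt j hj v, if_neg hj.ne, if_neg (by exact fun h => absurd hj (not_lt.mpr h.le))]
      ring
    · rw [heq v, if_pos rfl, if_neg (lt_irrefl _)]
      ring
    · rw [hgt j hj v, if_neg hj.ne', if_pos hj]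
      ring
  rw [Finset.sum_congr rfl fun j _ => step j, ← Finset.sum_mul, Finset.sum_add_distrib,
    Finset.sum_ite_eq' Finset.univ i (fun _ => A), if_pos (Finset.mem_univ i),
    Finset.sum_boole]

lemma eig_aux' (hk : ∀ i, 1 ≤ k i) (f : TV d m k → ℝ) (i : Fin d)
    (hlt : ∀ j, ¬ i ≤ j → ∀ v, stageTerm d m k j f v = 0)
    (hge : ∀ j, i ≤ j → ∀ v, stageTerm d m k j f v = f v) :
    lapOp (thrEdges d m k) f
      = (((Finset.univ.filter fun j => i ≤ j).card : ℝ)) • f := by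
  funext v
  rw [Pi.smul_apply, smul_eq_mul, lap_decomp hk]
  have step : ∀ j : Fin d, stageTerm d m k j f v
      = (if i ≤ j then (1:ℝ) else 0) * f v := by
    intro j
    by_cases hj : i ≤ j
    · rw [hge j hj v, if_pos hj, one_mul]
    · rw [hlt j hj v, if_neg hj, zero_mul]
  rw [Finset.sum_congr rfl fun j _ => step j, ← Finset.sum_mul, Finset.sum_boole]

/-- Eigen-equation for zero-sum functions supported on `domSet i`. -/
lemma eig_Sdiff (hk : ∀ i, 1 ≤ k i) {i : Fin d} {f : TV d m k → ℝ}
    (hs : ∀ v, v ∉ domSet d m k i → f v = 0) (h0 : ∑ v ∈ domSet d m k i, f v = 0) :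
    lapOp (thrEdges d m k) f
      = ((((k i : ℝ) + 1) * ((before d m k i).card : ℝ) / (k i : ℝ))
          + ((Finset.univ.filter fun j => i < j).card : ℝ)) • f := by
  refine eig_aux hk f i _ ?_ (stage_Sdiff hk hs h0) ?_
  · intro j hj v
    refine stage_const (c := 0) ?_ ?_ v
    · exact fun w hw => hs w (Finset.disjoint_left.mp (disjoint_before_domSet' hj.le) hw)
    · exact fun w hw => hs w (Finset.disjoint_right.mp (disjoint_domSet hj.ne') hw)
  · intro j hj v
    refine stage_id hk ?_ ?_ v
    · exact fun w hw => hs w fun hw' => hw (domSet_subset_before hj hw')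
    · rw [← Finset.sum_subset (domSet_subset_before hj) fun x _ hx => hs x hx, h0]

/-- Eigen-equation for zero-sum functions supported on the `i`-th isolated block. -/
lemma eig_Mdiff (hk : ∀ i, 1 ≤ k i) {i : Fin d} {f : TV d m k → ℝ}
    (hs : ∀ j (a : Fin (m j)), j ≠ i → f (Sum.inl ⟨j, a⟩) = 0)
    (hs' : ∀ j (b : Fin (k j)), f (Sum.inr ⟨j, b⟩) = 0)
    (h0 : ∑ v ∈ before d m k i, f v = 0) :
    lapOp (thrEdges d m k) f
      = (((Finset.univ.filter fun j => i ≤ j).card : ℝ)) • f := by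
  have hsupp : ∀ j, i ≤ j → ∀ v, v ∉ before d m k j → f v = 0 := by
    rintro j hj (⟨j', a⟩ | ⟨j', b⟩) hv
    · refine hs j' a fun h => ?_
      exact hv (mem_before_inl.mpr (h ▸ hj))
    · exact hs' j' b
  refine eig_aux' hk f i ?_ ?_
  · intro j hj v
    refine stage_const (c := 0) ?_ ?_ v
    · rintro (⟨j', a⟩ | ⟨j', b⟩) hw
      · rw [mem_before_inl] at hw
        exact hs j' a fun h => hj (h ▸ hw)
      · exact hs' j' b
    · rintro (⟨j', a⟩ | ⟨j', b⟩) hw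
      · exact absurd hw not_mem_domSet_inl
      · exact hs' j' b
  · intro j hj v
    refine stage_id hk (hsupp j hj) ?_ v
    have hzero : ∀ x ∈ before d m k j, x ∉ before d m k i → f x = 0 := by
      rintro (⟨j', a⟩ | ⟨j', b⟩) _ hx
      · exact hs j' a fun h => hx (mem_before_inl.mpr h.le)
      · exact hs' j' b
    rw [← Finset.sum_subset (before_subset_before hj) hzero, h0]

/-- Eigen-equation for `muVec`. -/
lemma eig_mu (hk : ∀ i, 1 ≤ k i) (i : Fin d) :
    lapOp (thrEdges d m k) (muVec d m k i)
      = (((((before d m k i).card : ℝ) + (k i : ℝ)) / (k i : ℝ))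
          + ((Finset.univ.filter fun j => i < j).card : ℝ)) • muVec d m k i := by
  refine eig_aux hk _ i _ ?_ (stage_mu hk i) ?_
  · intro j hj v
    refine stage_const (c := (k i : ℝ)) ?_ ?_ v
    · intro w hw
      rw [muVec, if_pos (before_subset_before hj.le hw)]
    · intro w hw
      rw [muVec, if_pos (domSet_subset_before hj hw)]
  · intro j hj v
    have hsub : before d m k i ∪ domSet d m k i ⊆ before d m k j := by
      rw [Finset.union_subset_iff]
      exact ⟨before_subset_before hj.le, domSet_subset_before hj⟩
    have hzero : ∀ w, w ∉ before d m k i ∪ domSet d m k i → muVec d m k i w = 0 := by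
      intro w hw
      rw [Finset.mem_union, not_or] at hw
      rw [muVec, if_neg hw.1, if_neg hw.2]
    refine stage_id hk (fun w hw => hzero w fun h => hw (hsub h)) ?_ v
    rw [← Finset.sum_subset hsub fun x _ hx => hzero x hx,
      Finset.sum_union (disjoint_before_domSet i)]
    have h1 : ∑ w ∈ before d m k i, muVec d m k i w
        = ((before d m k i).card : ℝ) * (k i : ℝ) := by
      rw [Finset.sum_congr rfl fun w hw => by rw [muVec, if_pos hw],
        Finset.sum_const, nsmul_eq_mul]
    have h2 : ∑ w ∈ domSet d m k i, muVec d m k i w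
        = (k i : ℝ) * (-((before d m k i).card : ℝ)) := by
      rw [Finset.sum_congr rfl fun w hw => by
        rw [muVec, if_neg (Finset.disjoint_right.mp (disjoint_before_domSet i) hw), if_pos hw],
        Finset.sum_const, card_domSet, nsmul_eq_mul]
    rw [h1, h2]
    ring

/-- Constant functions are in the kernel. -/
lemma eig_const (hk : ∀ i, 1 ≤ k i) (c : ℝ) :
    lapOp (thrEdges d m k) (fun _ => c) = (0:ℝ) • (fun _ => c : TV d m k → ℝ) := by
  funext v
  rw [Pi.smul_apply, smul_eq_mul, zero_mul, lap_decomp hk]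
  exact Finset.sum_eq_zero fun j _ => stage_const (fun _ _ => rfl) (fun _ _ => rfl) v

/-! ### The step vector `nuVec` -/

/-- The `i`-th isolated block. -/
def Mblk (d : ℕ) (m k : Fin d → ℕ) (i : Fin d) : Finset (TV d m k) :=
  (Finset.univ : Finset (Fin (m i))).image fun a => Sum.inl ⟨i, a⟩

lemma mem_Mblk_inl {i j : Fin d} {a : Fin (m j)} :
    (Sum.inl ⟨j, a⟩ : TV d m k) ∈ Mblk d m k i ↔ j = i := by
  simp only [Mblk, Finset.mem_image, Finset.mem_univ, true_and]
  constructor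
  · rintro ⟨a', h⟩
    obtain ⟨rfl⟩ : (⟨i, a'⟩ : Σ j : Fin d, Fin (m j)) = ⟨j, a⟩ := Sum.inl.inj h
    rfl
  · rintro rfl; exact ⟨a, rfl⟩

lemma not_mem_Mblk_inr {i j : Fin d} {b : Fin (k j)} :
    (Sum.inr ⟨j, b⟩ : TV d m k) ∉ Mblk d m k i := by
  simp [Mblk]

lemma card_Mblk (i : Fin d) : (Mblk d m k i).card = m i := by
  have hinj : Function.Injective (fun a : Fin (m i) => (Sum.inl ⟨i, a⟩ : TV d m k)) := by
    intro a a' h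
    obtain ⟨-, h2⟩ := Sigma.mk.inj_iff.mp (Sum.inl.inj h)
    exact eq_of_heq h2
  rw [Mblk, Finset.card_image_of_injective _ hinj, Finset.card_univ, Fintype.card_fin]

lemma Mblk_subset_before {i j : Fin d} (h : i ≤ j) :
    Mblk d m k i ⊆ before d m k j := by
  rintro (⟨j', a⟩ | ⟨j', b⟩) hv
  · rw [mem_Mblk_inl] at hv
    exact mem_before_inl.mpr (hv ▸ h)
  · exact absurd hv not_mem_Mblk_inr

/-- Step vector: `m i'` on `before i ∪ domSet i`, `-(b_i + k_i)` on `Mblk i'`. -/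
noncomputable def nuVec (d : ℕ) (m k : Fin d → ℕ) (i i' : Fin d) : TV d m k → ℝ :=
  fun v => if v ∈ before d m k i ∪ domSet d m k i then (m i' : ℝ)
    else if v ∈ Mblk d m k i' then -(((before d m k i).card : ℝ) + (k i : ℝ)) else 0

lemma eig_nu (hk : ∀ i, 1 ≤ k i) (i i' : Fin d) (hii' : (i : ℕ) + 1 = (i' : ℕ)) :
    lapOp (thrEdges d m k) (nuVec d m k i i')
      = (((Finset.univ.filter fun j => i' ≤ j).card : ℝ)) • nuVec d m k i i' := by
  have hi : i < i' := by rw [Fin.lt_def]; omega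
  have hMd : Disjoint (Mblk d m k i') (before d m k i ∪ domSet d m k i) := by
    rw [Finset.disjoint_left]
    rintro (⟨j', a⟩ | ⟨j', b⟩) hv hv'
    · rw [mem_Mblk_inl] at hv
      rcases Finset.mem_union.mp hv' with h | h
      · rw [mem_before_inl] at h
        exact absurd (hv ▸ h) (not_le.mpr hi)
      · exact not_mem_domSet_inl h
    · exact not_mem_Mblk_inr hv
  have hsub : before d m k i ∪ domSet d m k i ∪ Mblk d m k i' ⊆ before d m k i' := by
    refine Finset.union_subset (Finset.union_subset ?_ ?_) ?_
    · exact before_subset_before hi.le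
    · exact domSet_subset_before hi
    · exact Mblk_subset_before le_rfl
  have hzero : ∀ w, w ∉ before d m k i ∪ domSet d m k i ∪ Mblk d m k i' →
      nuVec d m k i i' w = 0 := by
    intro w hw
    rw [Finset.mem_union, not_or] at hw
    rw [nuVec, if_neg hw.1, if_neg hw.2]
  refine eig_aux' hk _ i' ?_ ?_
  · intro j hj v
    have hji : j ≤ i := by
      rw [Fin.le_def]; rw [Fin.le_def] at hj; omega
    refine stage_const (c := (m i' : ℝ)) ?_ ?_ v
    · intro w hw
      rw [nuVec, if_pos (Finset.mem_union_left _ (before_subset_before hji hw))]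
    · intro w hw
      rcases eq_or_lt_of_le hji with rfl | hji'
      · rw [nuVec, if_pos (Finset.mem_union_right _ hw)]
      · rw [nuVec, if_pos (Finset.mem_union_left _ (domSet_subset_before hji' hw))]
  · intro j hj v
    have hsub' : before d m k i ∪ domSet d m k i ∪ Mblk d m k i' ⊆ before d m k j :=
      hsub.trans (before_subset_before hj)
    refine stage_id hk (fun w hw => hzero w fun h => hw (hsub' h)) ?_ v
    rw [← Finset.sum_subset hsub' fun x _ hx => hzero x hx,
      Finset.sum_union hMd.symm]
    have h1 : ∑ w ∈ before d m k i ∪ domSet d m k i, nuVec d m k i i' w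
        = (((before d m k i).card : ℝ) + (k i : ℝ)) * (m i' : ℝ) := by
      rw [Finset.sum_congr rfl fun w hw => by rw [nuVec, if_pos hw],
        Finset.sum_const, nsmul_eq_mul,
        Finset.card_union_of_disjoint (disjoint_before_domSet i), card_domSet]
      push_cast
      ring
    have h2 : ∑ w ∈ Mblk d m k i', nuVec d m k i i' w
        = (m i' : ℝ) * (-(((before d m k i).card : ℝ) + (k i : ℝ))) := by
      rw [Finset.sum_congr rfl fun w hw => by
        rw [nuVec, if_neg (Finset.disjoint_left.mp hMd hw), if_pos hw],
        Finset.sum_const, card_Mblk, nsmul_eq_mul]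
    rw [h1, h2]
    ring

/-! ### The Laplacian as a linear map -/

noncomputable def lapLin {V : Type} [Fintype V] [DecidableEq V] (E : Finset (Finset V)) :
    (V → ℝ) →ₗ[ℝ] (V → ℝ) where
  toFun := lapOp E
  map_add' f g := by
    funext v
    simp only [lapOp, Pi.add_apply]
    rw [← Finset.sum_add_distrib]
    refine Finset.sum_congr rfl fun e _ => ?_
    rw [← mul_add, ← Finset.sum_add_distrib]
    exact congrArg _ (Finset.sum_congr rfl fun u _ => by ring)
  map_smul' c f := by
    funext v
    simp only [lapOp, Pi.smul_apply, smul_eq_mul, RingHom.id_apply]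
    rw [Finset.mul_sum]
    refine Finset.sum_congr rfl fun e _ => ?_
    have : ∑ u ∈ e, (c * f v - c * f u) = c * ∑ u ∈ e, (f v - f u) := by
      rw [Finset.mul_sum]
      exact Finset.sum_congr rfl fun u _ => by ring
    rw [this]
    ring

/-! ### Rationality of the eigenvalues -/

lemma ratkey {N kk c : ℕ} (hc : N = kk * c) (hkk : kk ≠ 0) (hcc : c ≠ 0) (a t : ℕ) :
    ∃ p : ℤ, ((a : ℝ) / (kk : ℝ) + (t : ℝ)) = 1 / (N : ℝ) * (p : ℝ) := by
  refine ⟨a * c + N * t, ?_⟩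
  subst hc
  have h1 : (kk : ℝ) ≠ 0 := Nat.cast_ne_zero.mpr hkk
  have h2 : (c : ℝ) ≠ 0 := Nat.cast_ne_zero.mpr hcc
  push_cast
  field_simp

/-! ### Indicator vectors -/

noncomputable def chi (d : ℕ) (m k : Fin d → ℕ) (i : Fin d) : TV d m k → ℝ :=
  fun v => if v ∈ before d m k i then 1 else 0

noncomputable def sig (d : ℕ) (m k : Fin d → ℕ) (i : Fin d) : TV d m k → ℝ :=
  fun v => if v ∈ domSet d m k i then 1 else 0

noncomputable def tau (d : ℕ) (m k : Fin d → ℕ) (i : Fin d) : TV d m k → ℝ :=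
  fun v => if v ∈ Mblk d m k i then 1 else 0

lemma not_mem_Mblk_of_mem_before {i i' : Fin d} (h : i < i') {v : TV d m k}
    (hv : v ∈ before d m k i) : v ∉ Mblk d m k i' := by
  rcases v with ⟨j, a⟩ | ⟨j, b⟩
  · rw [mem_before_inl] at hv
    rw [mem_Mblk_inl]
    exact fun hh => absurd (hh ▸ hv) (not_le.mpr h)
  · exact not_mem_Mblk_inr

lemma mem_before_succ {i i' : Fin d} (h : (i : ℕ) + 1 = (i' : ℕ)) (v : TV d m k) :
    v ∈ before d m k i' ↔ (v ∈ before d m k i ∨ v ∈ domSet d m k i) ∨ v ∈ Mblk d m k i' := by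
  rcases v with ⟨j, a⟩ | ⟨j, b⟩
  · rw [mem_before_inl, mem_before_inl, mem_Mblk_inl,
      iff_false_intro (not_mem_domSet_inl (i := i)), or_false, Fin.le_def, Fin.le_def,
      Fin.ext_iff]
    omega
  · rw [mem_before_inr, mem_before_inr, mem_domSet_inr,
      iff_false_intro (not_mem_Mblk_inr (i := i')), or_false, Fin.lt_def, Fin.lt_def,
      Fin.ext_iff]
    omega

lemma idA (i : Fin d) :
    (((before d m k i).card : ℝ) + (k i : ℝ)) • chi d m k i
      = ((before d m k i).card : ℝ) • (chi d m k i + sig d m k i) + muVec d m k i := by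
  funext v
  simp only [Pi.smul_apply, Pi.add_apply, smul_eq_mul, chi, sig, muVec]
  split_ifs with h1 h2
  · exact absurd h2 (not_mem_domSet_of_mem_before h1)
  all_goals ring

lemma idSig (i : Fin d) :
    sig d m k i = (chi d m k i + sig d m k i) - chi d m k i := by
  funext v
  simp only [Pi.sub_apply, Pi.add_apply]
  ring

lemma idC {i i' : Fin d} (h : (i : ℕ) + 1 = (i' : ℕ)) :
    ((m i' : ℝ) + ((before d m k i).card : ℝ) + (k i : ℝ)) • (chi d m k i + sig d m k i)
      = (((before d m k i).card : ℝ) + (k i : ℝ)) • chi d m k i' + nuVec d m k i i' := by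
  have hi : i < i' := Fin.lt_def.mpr (by omega)
  funext v
  simp only [Pi.smul_apply, Pi.add_apply, smul_eq_mul, chi, sig, nuVec]
  by_cases h1 : v ∈ before d m k i
  · rw [if_pos h1, if_neg (not_mem_domSet_of_mem_before h1),
      if_pos (before_subset_before hi.le h1), if_pos (Finset.mem_union_left _ h1)]
    ring
  · by_cases h2 : v ∈ domSet d m k i
    · rw [if_neg h1, if_pos h2, if_pos (domSet_subset_before hi h2),
        if_pos (Finset.mem_union_right _ h2)]
      ring
    · have hnu : v ∉ before d m k i ∪ domSet d m k i := by
        rw [Finset.mem_union]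
        exact fun hh => hh.elim h1 h2
      by_cases h3 : v ∈ Mblk d m k i'
      · rw [if_neg h1, if_neg h2, if_pos (Mblk_subset_before le_rfl h3), if_neg hnu, if_pos h3]
        ring
      · have hB' : v ∉ before d m k i' := fun hh => by
          rcases (mem_before_succ h v).mp hh with hh' | hh'
          · exact hh'.elim h1 h2
          · exact h3 hh'
        rw [if_neg h1, if_neg h2, if_neg hB', if_neg hnu, if_neg h3]
        ring

lemma idE {i i' : Fin d} (h : (i : ℕ) + 1 = (i' : ℕ)) :
    tau d m k i' = chi d m k i' - (chi d m k i + sig d m k i) := by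
  have hi : i < i' := Fin.lt_def.mpr (by omega)
  funext v
  simp only [Pi.sub_apply, Pi.add_apply, tau, chi, sig]
  by_cases h1 : v ∈ before d m k i
  · rw [if_pos h1, if_neg (not_mem_domSet_of_mem_before h1),
      if_pos (before_subset_before hi.le h1), if_neg (not_mem_Mblk_of_mem_before hi h1)]
    ring
  · by_cases h2 : v ∈ domSet d m k i
    · have h3 : v ∉ Mblk d m k i' := by
        rcases v with ⟨j, a⟩ | ⟨j, b⟩
        · exact absurd h2 not_mem_domSet_inl
        · exact not_mem_Mblk_inr
      rw [if_neg h1, if_pos h2, if_pos (domSet_subset_before hi h2), if_neg h3]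
      ring
    · by_cases h3 : v ∈ Mblk d m k i'
      · rw [if_neg h1, if_neg h2, if_pos (Mblk_subset_before le_rfl h3), if_pos h3]
        ring
      · have hB' : v ∉ before d m k i' := fun hh => by
          rcases (mem_before_succ h v).mp hh with hh' | hh'
          · exact hh'.elim h1 h2
          · exact h3 hh'
        rw [if_neg h1, if_neg h2, if_neg hB', if_neg h3]
        ring

lemma idD (i : Fin d) (h : (i : ℕ) = d - 1) :
    chi d m k i + sig d m k i = fun _ => (1:ℝ) := by
  funext v
  simp only [Pi.add_apply, chi, sig]
  rcases v with ⟨j, a⟩ | ⟨j, b⟩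
  · have hj : j ≤ i := Fin.le_def.mpr (by have := j.isLt; omega)
    rw [if_pos (mem_before_inl.mpr hj), if_neg not_mem_domSet_inl]
    norm_num
  · by_cases hj : j = i
    · subst hj
      rw [if_neg (by rw [mem_before_inr]; exact lt_irrefl j), if_pos (mem_domSet_inr.mpr rfl)]
      norm_num
    · have hj' : j < i := by
        rw [Fin.lt_def]
        have h1 := j.isLt
        have h2 : (j : ℕ) ≠ (i : ℕ) := fun hh => hj (Fin.ext hh)
        omega
      rw [if_pos (mem_before_inr.mpr hj'), if_neg (by rw [mem_domSet_inr]; exact hj)]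
      norm_num

lemma idF (i : Fin d) (h : (i : ℕ) = 0) : tau d m k i = chi d m k i := by
  funext v
  simp only [tau, chi]
  rcases v with ⟨j, a⟩ | ⟨j, b⟩
  · have : ((Sum.inl ⟨j, a⟩ : TV d m k) ∈ Mblk d m k i)
        ↔ ((Sum.inl ⟨j, a⟩ : TV d m k) ∈ before d m k i) := by
      rw [mem_Mblk_inl, mem_before_inl, Fin.ext_iff, Fin.le_def]
      omega
    rw [if_congr this rfl rfl]
  · rw [if_neg not_mem_Mblk_inr, if_neg (by
      rw [mem_before_inr, Fin.lt_def]
      omega)]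

lemma sum_sig (i : Fin d) : ∑ w ∈ domSet d m k i, sig d m k i w = (k i : ℝ) := by
  rw [Finset.sum_congr rfl fun w hw => by rw [sig, if_pos hw], Finset.sum_const, card_domSet,
    nsmul_eq_mul, mul_one]

lemma sum_tau_before (i : Fin d) :
    ∑ w ∈ before d m k i, tau d m k i w = (m i : ℝ) := by
  rw [← Finset.sum_subset (Mblk_subset_before le_rfl) fun x _ hx => by rw [tau, if_neg hx],
    Finset.sum_congr rfl fun w hw => by rw [tau, if_pos hw], Finset.sum_const, card_Mblk,
    nsmul_eq_mul, mul_one]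

end Stmt12

open Stmt12

/-- Every threshold hypergraph is Laplacian `r`-integral for some rational `r`. -/
theorem stmt_12 (d : ℕ) (m k : Fin d → ℕ)
    (hm : ∀ h : 0 < d, 1 ≤ m ⟨0, h⟩) (hk : ∀ i, 1 ≤ k i) :
    ∃ r : ℚ, ∀ (lam : ℝ) (f : TV d m k → ℝ), f ≠ 0 →
      lapOp (thrEdges d m k) f = lam • f → ∃ p : ℤ, lam = (r : ℝ) * p := by
  classical
  set N : ℕ := ∏ i, k i with hN
  have hN0 : N ≠ 0 := by
    rw [hN]
    exact Finset.prod_ne_zero_iff.mpr fun i _ => Nat.one_le_iff_ne_zero.mp (hk i)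
  have hNR : (N : ℝ) ≠ 0 := Nat.cast_ne_zero.mpr hN0
  refine ⟨1 / (N : ℚ), ?_⟩
  intro lam f hf0 heig
  set T : Module.End ℝ (TV d m k → ℝ) := lapLin (thrEdges d m k) with hT
  set Sset : Set ℝ := {x | ∃ p : ℤ, x = 1 / (N : ℝ) * (p : ℝ)} with hSs
  suffices hsuf : lam ∈ Sset by
    obtain ⟨p, hp⟩ := hsuf
    exact ⟨p, by rw [hp]; push_cast; ring⟩
  by_contra hlam
  set V' : Submodule ℝ (TV d m k → ℝ) := ⨆ μ ∈ Sset, T.eigenspace μ with hV'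
  have hmemV' : ∀ (C : ℝ) (g : TV d m k → ℝ), C ∈ Sset →
      lapOp (thrEdges d m k) g = C • g → g ∈ V' := by
    intro C g hC hg
    have hgC : g ∈ T.eigenspace C := Module.End.mem_eigenspace_iff.mpr hg
    exact (le_iSup₂ (f := fun μ (_ : μ ∈ Sset) => T.eigenspace μ) C hC) hgC
  have hnat : ∀ t : ℕ, ((t : ℝ)) ∈ Sset := by
    intro t
    refine ⟨(N : ℤ) * t, ?_⟩
    push_cast
    field_simp
  have hfrac : ∀ (i : Fin d) (a t : ℕ), ((a : ℝ) / (k i : ℝ) + (t : ℝ)) ∈ Sset := by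
    intro i a t
    obtain ⟨c, hc⟩ := Finset.dvd_prod_of_mem k (Finset.mem_univ i)
    have hcc : c ≠ 0 := fun h => hN0 (by rw [hN, hc, h, mul_zero])
    exact ratkey hc (Nat.one_le_iff_ne_zero.mp (hk i)) hcc a t
  have hconstV : ∀ c : ℝ, (fun _ => c : TV d m k → ℝ) ∈ V' :=
    fun c => hmemV' 0 _ ⟨0, by norm_num⟩ (eig_const hk c)
  have hmuV : ∀ i, muVec d m k i ∈ V' := by
    intro i
    refine hmemV' _ _ ?_ (eig_mu hk i)
    have heq : ((((before d m k i).card + k i : ℕ)) : ℝ) / (k i : ℝ)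
          + (((Finset.univ.filter fun j => i < j).card : ℕ) : ℝ)
        = (((before d m k i).card : ℝ) + (k i : ℝ)) / (k i : ℝ)
          + ((Finset.univ.filter fun j => i < j).card : ℝ) := by
      push_cast
      ring
    exact heq ▸ hfrac i _ _
  have hnuV : ∀ i i' : Fin d, (i : ℕ) + 1 = (i' : ℕ) → nuVec d m k i i' ∈ V' :=
    fun i i' hii' => hmemV' _ _ (hnat _) (eig_nu hk i i' hii')
  have hSdiffV : ∀ (i : Fin d) (g : TV d m k → ℝ), (∀ v, v ∉ domSet d m k i → g v = 0) →
      (∑ v ∈ domSet d m k i, g v = 0) → g ∈ V' := by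
    intro i g hs h0
    refine hmemV' _ _ ?_ (eig_Sdiff hk hs h0)
    have heq : (((k i + 1) * (before d m k i).card : ℕ) : ℝ) / (k i : ℝ)
          + (((Finset.univ.filter fun j => i < j).card : ℕ) : ℝ)
        = ((k i : ℝ) + 1) * ((before d m k i).card : ℝ) / (k i : ℝ)
          + ((Finset.univ.filter fun j => i < j).card : ℝ) := by
      push_cast
      ring
    exact heq ▸ hfrac i _ _
  have hMdiffV : ∀ (i : Fin d) (g : TV d m k → ℝ),
      (∀ j (a : Fin (m j)), j ≠ i → g (Sum.inl ⟨j, a⟩) = 0) →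
      (∀ j (b : Fin (k j)), g (Sum.inr ⟨j, b⟩) = 0) →
      (∑ v ∈ before d m k i, g v = 0) → g ∈ V' :=
    fun i g hs hs' h0 => hmemV' _ _ (hnat _) (eig_Mdiff hk hs hs' h0)
  have step_chi : ∀ i : Fin d, chi d m k i + sig d m k i ∈ V' →
      chi d m k i ∈ V' ∧ sig d m k i ∈ V' := by
    intro i hsum
    have h3 : (1 : ℝ) ≤ (k i : ℝ) := by exact_mod_cast hk i
    have h2 : (0 : ℝ) ≤ ((before d m k i).card : ℝ) := Nat.cast_nonneg _
    have hbk : (((before d m k i).card : ℝ) + (k i : ℝ)) ≠ 0 := by linarith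
    have hchi : chi d m k i ∈ V' := by
      have he : chi d m k i = (((before d m k i).card : ℝ) + (k i : ℝ))⁻¹
          • (((before d m k i).card : ℝ) • (chi d m k i + sig d m k i) + muVec d m k i) := by
        rw [← idA i, smul_smul, inv_mul_cancel₀ hbk, one_smul]
      rw [he]
      exact Submodule.smul_mem _ _
        (Submodule.add_mem _ (Submodule.smul_mem _ _ hsum) (hmuV i))
    refine ⟨hchi, ?_⟩
    rw [idSig i]
    exact Submodule.sub_mem _ hsum hchi
  have hchain : ∀ n : ℕ, ∀ i : Fin d, d - (i : ℕ) ≤ n + 1 →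
      chi d m k i + sig d m k i ∈ V' := by
    intro n
    induction n with
    | zero =>
      intro i hi
      have hival : (i : ℕ) = d - 1 := by have := i.isLt; omega
      rw [idD i hival]
      exact hconstV 1
    | succ n ih =>
      intro i hi
      by_cases hcase : d - (i : ℕ) ≤ n + 1
      · exact ih i hcase
      · have hlt : (i : ℕ) + 1 < d := by have := i.isLt; omega
        set i' : Fin d := ⟨(i : ℕ) + 1, hlt⟩ with hi'def
        have hii' : (i : ℕ) + 1 = (i' : ℕ) := rfl
        have h1 : chi d m k i' + sig d m k i' ∈ V' := ih i' (by
          have : (i' : ℕ) = (i : ℕ) + 1 := rfl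
          omega)
        obtain ⟨hchi', -⟩ := step_chi i' h1
        have h3 : (1 : ℝ) ≤ (k i : ℝ) := by exact_mod_cast hk i
        have h2 : (0 : ℝ) ≤ ((before d m k i).card : ℝ) := Nat.cast_nonneg _
        have h4 : (0 : ℝ) ≤ (m i' : ℝ) := Nat.cast_nonneg _
        have hpos : ((m i' : ℝ) + ((before d m k i).card : ℝ) + (k i : ℝ)) ≠ 0 := by linarith
        have he : chi d m k i + sig d m k i
            = ((m i' : ℝ) + ((before d m k i).card : ℝ) + (k i : ℝ))⁻¹
              • ((((before d m k i).card : ℝ) + (k i : ℝ)) • chi d m k i'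
                + nuVec d m k i i') := by
          rw [← idC hii', smul_smul, inv_mul_cancel₀ hpos, one_smul]
        rw [he]
        exact Submodule.smul_mem _ _
          (Submodule.add_mem _ (Submodule.smul_mem _ _ hchi') (hnuV i i' hii'))
  have hcs : ∀ i : Fin d, chi d m k i + sig d m k i ∈ V' :=
    fun i => hchain d i (by omega)
  have hchiV : ∀ i, chi d m k i ∈ V' := fun i => (step_chi i (hcs i)).1
  have hsigV : ∀ i, sig d m k i ∈ V' := fun i => (step_chi i (hcs i)).2
  have htauV : ∀ i : Fin d, tau d m k i ∈ V' := by
    intro i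
    by_cases h0 : (i : ℕ) = 0
    · rw [idF i h0]
      exact hchiV i
    · have hlt : (i : ℕ) - 1 < d := by have := i.isLt; omega
      set ip : Fin d := ⟨(i : ℕ) - 1, hlt⟩ with hipdef
      have hadj : (ip : ℕ) + 1 = (i : ℕ) := by
        have : (ip : ℕ) = (i : ℕ) - 1 := rfl
        omega
      rw [idE hadj]
      exact Submodule.sub_mem _ (hchiV i) (hcs ip)
  have hsingle : ∀ v : TV d m k, Pi.single v (1 : ℝ) ∈ V' := by
    rintro (⟨i, a⟩ | ⟨i, b⟩)
    · have hm0 : (m i : ℝ) ≠ 0 :=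
        Nat.cast_ne_zero.mpr (Nat.pos_iff_ne_zero.mp a.pos)
      set g : TV d m k → ℝ :=
        Pi.single (Sum.inl ⟨i, a⟩ : TV d m k) (1 : ℝ) - (m i : ℝ)⁻¹ • tau d m k i with hg
      have hgV : g ∈ V' := by
        refine hMdiffV i g ?_ ?_ ?_
        · intro j a' hj
          rw [hg]
          simp only [Pi.sub_apply, Pi.smul_apply, smul_eq_mul, tau]
          rw [Pi.single_apply,
            if_neg (fun hh => hj (congrArg Sigma.fst (Sum.inl.inj hh))),
            if_neg (fun hh => hj (mem_Mblk_inl.mp hh))]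
          ring
        · intro j b'
          rw [hg]
          simp only [Pi.sub_apply, Pi.smul_apply, smul_eq_mul, tau]
          rw [Pi.single_apply, if_neg (by simp), if_neg not_mem_Mblk_inr]
          ring
        · rw [hg]
          have h1 : ∑ w ∈ before d m k i,
              (Pi.single (Sum.inl ⟨i, a⟩ : TV d m k) (1 : ℝ)) w = 1 := by
            rw [Finset.sum_pi_single']
            exact if_pos (mem_before_inl.mpr le_rfl)
          simp only [Pi.sub_apply, Pi.smul_apply, smul_eq_mul]
          rw [Finset.sum_sub_distrib, h1, ← Finset.mul_sum, sum_tau_before i]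
          field_simp
          norm_num
      have he : Pi.single (Sum.inl ⟨i, a⟩ : TV d m k) (1 : ℝ)
          = g + (m i : ℝ)⁻¹ • tau d m k i := by
        rw [hg, sub_add_cancel]
      rw [he]
      exact Submodule.add_mem _ hgV (Submodule.smul_mem _ _ (htauV i))
    · have hk0 : (k i : ℝ) ≠ 0 :=
        Nat.cast_ne_zero.mpr (Nat.one_le_iff_ne_zero.mp (hk i))
      set g : TV d m k → ℝ :=
        Pi.single (Sum.inr ⟨i, b⟩ : TV d m k) (1 : ℝ) - (k i : ℝ)⁻¹ • sig d m k i with hg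
      have hgV : g ∈ V' := by
        refine hSdiffV i g ?_ ?_
        · intro w hw
          rw [hg]
          simp only [Pi.sub_apply, Pi.smul_apply, smul_eq_mul, sig]
          rw [Pi.single_apply,
            if_neg (fun hh => hw (by rw [hh]; exact mem_domSet_inr.mpr rfl)), if_neg hw]
          ring
        · rw [hg]
          have h1 : ∑ w ∈ domSet d m k i,
              (Pi.single (Sum.inr ⟨i, b⟩ : TV d m k) (1 : ℝ)) w = 1 := by
            rw [Finset.sum_pi_single']
            exact if_pos (mem_domSet_inr.mpr rfl)
          simp only [Pi.sub_apply, Pi.smul_apply, smul_eq_mul]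
          rw [Finset.sum_sub_distrib, h1, ← Finset.mul_sum, sum_sig i]
          field_simp
          norm_num
      have he : Pi.single (Sum.inr ⟨i, b⟩ : TV d m k) (1 : ℝ)
          = g + (k i : ℝ)⁻¹ • sig d m k i := by
        rw [hg, sub_add_cancel]
      rw [he]
      exact Submodule.add_mem _ hgV (Submodule.smul_mem _ _ (hsigV i))
  have htop : f ∈ V' := by
    have hrepr : f = ∑ v : TV d m k, Pi.single v (f v) := (Finset.univ_sum_single f).symm
    rw [hrepr]
    refine Submodule.sum_mem _ fun v _ => ?_
    have hsm : Pi.single v (f v) = (f v) • (Pi.single v (1 : ℝ) : TV d m k → ℝ) := by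
      rw [← Pi.single_smul, smul_eq_mul, mul_one]
    rw [hsm]
    exact Submodule.smul_mem _ _ (hsingle v)
  have hfE : f ∈ T.eigenspace lam := Module.End.mem_eigenspace_iff.mpr heig
  have hdisj : Disjoint (T.eigenspace lam) (⨆ μ ≠ lam, T.eigenspace μ) :=
    Module.End.eigenspaces_iSupIndep T lam
  have hle : V' ≤ ⨆ μ ≠ lam, T.eigenspace μ := by
    refine iSup₂_le fun μ hμ => ?_
    exact le_iSup₂ (f := fun μ (_ : μ ≠ lam) => T.eigenspace μ) μ (fun hh => hlam (hh ▸ hμ))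
  have hbot : f ∈ (⊥ : Submodule ℝ (TV d m k → ℝ)) :=
    hdisj.le_bot (Submodule.mem_inf.mpr ⟨hfE, hle htop⟩)
  exact hf0 ((Submodule.mem_bot ℝ).mp hbot)
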